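/- Suppose v : (0,∞) → ℝ is C² and satisfies (v'(s)² - 1)·v''(s) ≥ e^{4v(s)}, v'(s) ≤ -β-1 for all s > 0 where β ≥ 0, v''(s) > 0, lim_{s→∞} v'(s) = -(β+1), and lim_{s→∞} e^{4v(s)} = 0. Then for all s > 0, (v'(s)² - 1)² - e^{4v(s)} ≥ β²(β+2)². -/

import Mathlib

/-- If `v` is `C²` on `(0,∞)` with `(v'² - 1) v'' ≥ e^{4v}`, `v' ≤ -β - 1` (`β ≥ 0`),
`v'' > 0`, `v'(s) → -(β+1)` and `e^{4v(s)} → 0` as `s → ∞`, then for all `s > 0`,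
`(v'² - 1)² - e^{4v} ≥ β²(β+2)²`. -/
theorem rotational_penrose_first_integral_bound (v v' v'' : ℝ → ℝ) (β : ℝ) (hβ : 0 ≤ β)
    (hv : ∀ s ∈ Set.Ioi (0:ℝ), HasDerivAt v (v' s) s)
    (hv' : ∀ s ∈ Set.Ioi (0:ℝ), HasDerivAt v' (v'' s) s)
    (hineq : ∀ s ∈ Set.Ioi (0:ℝ), Real.exp (4 * v s) ≤ ((v' s) ^ 2 - 1) * v'' s)
    (hv'le : ∀ s ∈ Set.Ioi (0:ℝ), v' s ≤ -β - 1)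
    (hconv : ∀ s ∈ Set.Ioi (0:ℝ), 0 < v'' s)
    (hlim : Filter.Tendsto v' Filter.atTop (nhds (-(β + 1))))
    (hlim2 : Filter.Tendsto (fun s => Real.exp (4 * v s)) Filter.atTop (nhds 0)) :
    ∀ s ∈ Set.Ioi (0:ℝ),
      β ^ 2 * (β + 2) ^ 2 ≤ ((v' s) ^ 2 - 1) ^ 2 - Real.exp (4 * v s) := by
  set F : ℝ → ℝ := fun t => ((v' t) ^ 2 - 1) ^ 2 - Real.exp (4 * v t) with hFdef
  have hF : ∀ t ∈ Set.Ioi (0:ℝ),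
      HasDerivAt F (4 * v' t * (((v' t) ^ 2 - 1) * v'' t - Real.exp (4 * v t))) t := by
    intro t ht
    have h1 : HasDerivAt (fun t => ((v' t) ^ 2 - 1) ^ 2)
        ((2:ℕ) * ((v' t) ^ 2 - 1) ^ 1 * ((2:ℕ) * (v' t) ^ 1 * v'' t)) t :=
      (((hv' t ht).pow 2).sub_const 1).pow 2
    have h2 : HasDerivAt (fun t => Real.exp (4 * v t))
        (Real.exp (4 * v t) * (4 * v' t)) t := ((hv t ht).const_mul 4).exp
    have := h1.sub h2
    refine HasDerivAt.congr_deriv this ?_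
    push_cast
    ring
  have hderiv_nonpos : ∀ t ∈ Set.Ioi (0:ℝ),
      4 * v' t * (((v' t) ^ 2 - 1) * v'' t - Real.exp (4 * v t)) ≤ 0 := by
    intro t ht
    have h1 : v' t ≤ -1 := le_trans (hv'le t ht) (by linarith)
    have h2 : 0 ≤ ((v' t) ^ 2 - 1) * v'' t - Real.exp (4 * v t) := by
      linarith [hineq t ht]
    nlinarith
  have hAnti : AntitoneOn F (Set.Ioi 0) := by
    apply antitoneOn_of_deriv_nonpos (convex_Ioi 0)
    · exact fun t ht => (hF t ht).continuousAt.continuousWithinAt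
    · intro t ht
      rw [interior_Ioi] at ht
      exact (hF t ht).differentiableAt.differentiableWithinAt
    · intro t ht
      rw [interior_Ioi] at ht
      rw [(hF t ht).deriv]
      exact hderiv_nonpos t ht
  have hlimF : Filter.Tendsto F Filter.atTop (nhds (((-(β + 1)) ^ 2 - 1) ^ 2 - 0)) :=
    (((hlim.pow 2).sub_const 1).pow 2).sub hlim2
  intro s hs
  have key : ((-(β + 1)) ^ 2 - 1) ^ 2 - 0 ≤ F s := by
    refine le_of_tendsto hlimF ?_
    filter_upwards [Filter.eventually_ge_atTop s] with t hts
    exact hAnti hs (lt_of_lt_of_le hs hts) hts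
  calc β ^ 2 * (β + 2) ^ 2 = ((-(β + 1)) ^ 2 - 1) ^ 2 - 0 := by ring
    _ ≤ F s := key
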